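/- arXiv:math/0610467 — 4 statements merged into one kernel-verified Lean document; each statement's English description precedes it below -/
import Mathlib

section
/- Let A be a unital C*-algebra, let u and v be unitary elements of A such that the smallest closed *-subalgebra of A containing u and v is all of A, and let σ be a *-automorphism of A with σ(u) = v and σ(v) = u. Then the fixed-point set {a ∈ A : σ(a) = a} is equal to the smallest closed *-subalgebra of A containing the set {uⁿ + vⁿ : n ∈ ℤ}. -/
noncomputable section SymAux

namespace SymAux

variable {A : Type*} [CStarAlgebra A]

/-- Word evaluation: a list of (letter, exponent) pairs, `true ↦ u`, `false ↦ v`. -/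
def wrd (u v : unitary A) (L : List (Bool × ℤ)) : unitary A :=
  (L.map (fun p => (if p.1 then u else v) ^ p.2)).prod

lemma wrd_nil (u v : unitary A) : wrd u v [] = 1 := rfl

lemma wrd_cons (u v : unitary A) (p : Bool × ℤ) (L : List (Bool × ℤ)) :
    wrd u v (p :: L) = (if p.1 then u else v) ^ p.2 * wrd u v L := by
  simp [wrd]

lemma wrd_append (u v : unitary A) (L₁ L₂ : List (Bool × ℤ)) :
    wrd u v (L₁ ++ L₂) = wrd u v L₁ * wrd u v L₂ := by
  simp [wrd]

lemma wrd_merge (u v : unitary A) (b : Bool) (m n : ℤ) (L : List (Bool × ℤ)) :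
    wrd u v ((b, m) :: (b, n) :: L) = wrd u v ((b, m + n) :: L) := by
  cases b <;> simp [wrd_cons, zpow_add, mul_assoc]

lemma wrd_inv (u v : unitary A) (L : List (Bool × ℤ)) :
    (wrd u v L)⁻¹ = wrd u v ((L.reverse).map fun p => (p.1, -p.2)) := by
  induction L with
  | nil => simp [wrd_nil]
  | cons p L ih =>
    rcases p with ⟨b, n⟩
    rw [wrd_cons, mul_inv_rev, ih]
    cases b <;> simp [wrd_append, wrd_cons, wrd_nil, zpow_neg]

/-- The star subalgebra generated by the symmetric powers. -/
def B (u v : unitary A) : StarSubalgebra ℂ A :=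
  StarAlgebra.adjoin ℂ
    {a : A | ∃ n : ℤ, a = ((u ^ n : unitary A) : A) + ((v ^ n : unitary A) : A)}

lemma gen_mem (u v : unitary A) (n : ℤ) :
    ((u ^ n : unitary A) : A) + ((v ^ n : unitary A) : A) ∈ B u v :=
  StarAlgebra.subset_adjoin ℂ _ ⟨n, rfl⟩

lemma expand (u v : unitary A) (m : ℤ) (M : List (Bool × ℤ)) :
    (((u ^ m : unitary A) : A) + ((v ^ m : unitary A) : A)) *
      ((wrd u v M : A) + (wrd v u M : A)) =
    ((wrd u v ((true, m) :: M) : A) + (wrd v u ((true, m) :: M) : A)) +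
    ((wrd u v ((false, m) :: M) : A) + (wrd v u ((false, m) :: M) : A)) := by
  simp only [wrd_cons, if_true, if_false, Submonoid.coe_mul]
  rw [add_mul, mul_add, mul_add]
  grind

lemma skey (u v : unitary A) :
    ∀ (N : ℕ) (L : List (Bool × ℤ)), L.length ≤ N →
      ((wrd u v L : A) + (wrd v u L : A)) ∈ B u v := by
  intro N
  induction N with
  | zero =>
    intro L hL
    have h0 : L = [] := List.length_eq_zero_iff.mp (Nat.le_zero.mp hL)
    subst h0
    simpa [wrd_nil] using add_mem (one_mem (B u v)) (one_mem (B u v))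
  | succ N ih =>
    intro L hL
    match L with
    | [] => simpa [wrd_nil] using add_mem (one_mem (B u v)) (one_mem (B u v))
    | [(b, n)] =>
      cases b
      · simpa [wrd_cons, wrd_nil, add_comm] using gen_mem u v n
      · simpa [wrd_cons, wrd_nil] using gen_mem u v n
    | (b, m) :: (c, n) :: L₀ =>
      by_cases hbc : b = c
      · subst hbc
        rw [wrd_merge, wrd_merge]
        refine ih _ ?_
        simp only [List.length_cons] at hL ⊢
        omega
      · have hM : ((wrd u v ((c, n) :: L₀) : A) + (wrd v u ((c, n) :: L₀) : A)) ∈ B u v := by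
          refine ih _ ?_
          simp only [List.length_cons] at hL ⊢
          omega
        have hmerge : ((wrd u v ((c, m + n) :: L₀) : A) + (wrd v u ((c, m + n) :: L₀) : A))
            ∈ B u v := by
          refine ih _ ?_
          simp only [List.length_cons] at hL ⊢
          omega
        have hgen := gen_mem u v m
        have hmem := sub_mem (mul_mem hgen hM) hmerge
        have hexp := expand u v m ((c, n) :: L₀)
        cases b <;> cases c
        · exact absurd rfl hbc
        · -- b = false, c = true
          rw [wrd_merge u v, wrd_merge v u] at hexp
          have key : (wrd u v ((false, m) :: (true, n) :: L₀) : A)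
              + (wrd v u ((false, m) :: (true, n) :: L₀) : A)
              = (((u ^ m : unitary A) : A) + ((v ^ m : unitary A) : A)) *
                ((wrd u v ((true, n) :: L₀) : A) + (wrd v u ((true, n) :: L₀) : A))
                - ((wrd u v ((true, m + n) :: L₀) : A) + (wrd v u ((true, m + n) :: L₀) : A)) := by
            rw [eq_sub_iff_add_eq, add_comm]
            exact hexp.symm
          rw [key]
          exact hmem
        · -- b = true, c = false
          rw [wrd_merge u v, wrd_merge v u] at hexp
          have key : (wrd u v ((true, m) :: (false, n) :: L₀) : A)
              + (wrd v u ((true, m) :: (false, n) :: L₀) : A)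
              = (((u ^ m : unitary A) : A) + ((v ^ m : unitary A) : A)) *
                ((wrd u v ((false, n) :: L₀) : A) + (wrd v u ((false, n) :: L₀) : A))
                - ((wrd u v ((false, m + n) :: L₀) : A) + (wrd v u ((false, m + n) :: L₀) : A)) := by
            rw [eq_sub_iff_add_eq]
            exact hexp.symm
          rw [key]
          exact hmem
        · exact absurd rfl hbc

lemma sigma_wrd (σ : A ≃⋆ₐ[ℂ] A) (u v : unitary A) (hσu : σ u = v) (hσv : σ v = u) :
    ∀ L : List (Bool × ℤ), σ ((wrd u v L : unitary A) : A) = ((wrd v u L : unitary A) : A) := by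
  have h1 : Unitary.map (⟨(σ : A →* A), map_star σ⟩ : A →⋆* A) u = v := Subtype.ext hσu
  have h2 : Unitary.map (⟨(σ : A →* A), map_star σ⟩ : A →⋆* A) v = u := Subtype.ext hσv
  have key : ∀ L : List (Bool × ℤ), Unitary.map (⟨(σ : A →* A), map_star σ⟩ : A →⋆* A) (wrd u v L) = wrd v u L := by
    intro L
    induction L with
    | nil => rw [wrd_nil, wrd_nil, map_one]
    | cons p L ih =>
      rw [wrd_cons, map_mul, ih, wrd_cons]
      congr 1
      rcases p with ⟨b, n⟩
      cases b <;> simp [map_zpow, h1, h2]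
  intro L
  exact congrArg (Subtype.val) (key L)


/-- The words in `u, v` and their inverses. -/
def W (u v : unitary A) : Set A :=
  Set.range (fun L : List (Bool × ℤ) => ((wrd u v L : unitary A) : A))

lemma one_mem_W (u v : unitary A) : (1 : A) ∈ W u v :=
  ⟨[], by show ((wrd u v [] : unitary A) : A) = 1; rw [wrd_nil]; rfl⟩

lemma u_mem_W (u v : unitary A) : (u : A) ∈ W u v :=
  ⟨[(true, 1)], by simp [wrd_cons, wrd_nil]⟩

lemma v_mem_W (u v : unitary A) : (v : A) ∈ W u v :=
  ⟨[(false, 1)], by simp [wrd_cons, wrd_nil]⟩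

lemma W_mul (u v : unitary A) : ∀ x ∈ W u v, ∀ y ∈ W u v, x * y ∈ W u v := by
  rintro _ ⟨L₁, rfl⟩ _ ⟨L₂, rfl⟩
  exact ⟨L₁ ++ L₂, by show ((wrd u v (L₁ ++ L₂) : unitary A) : A) = _; rw [wrd_append]; rfl⟩

lemma W_star (u v : unitary A) : ∀ x ∈ W u v, star x ∈ W u v := by
  rintro _ ⟨L, rfl⟩
  refine ⟨(L.reverse).map fun p => (p.1, -p.2), ?_⟩
  show ((wrd u v ((L.reverse).map fun p => (p.1, -p.2)) : unitary A) : A) = _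
  rw [← wrd_inv, ← Unitary.star_eq_inv]
  exact Unitary.coe_star

lemma span_star (u v : unitary A) :
    ∀ x ∈ Submodule.span ℂ (W u v), star x ∈ Submodule.span ℂ (W u v) := by
  intro x hx
  induction hx using Submodule.span_induction with
  | mem y hy => exact Submodule.subset_span (W_star u v y hy)
  | zero => simpa using zero_mem (Submodule.span ℂ (W u v))
  | add a b _ _ ha hb => rw [star_add]; exact add_mem ha hb
  | smul c a _ ha => rw [star_smul]; exact Submodule.smul_mem _ _ ha

lemma adjoin_le_span (u v : unitary A) :
    ∀ x ∈ StarAlgebra.adjoin ℂ ({(u : A), (v : A)} : Set A),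
      x ∈ Submodule.span ℂ (W u v) := by
  intro x hx
  induction hx using StarAlgebra.adjoin_induction with
  | mem x hx =>
    rcases hx with rfl | rfl
    · exact Submodule.subset_span (u_mem_W u v)
    · exact Submodule.subset_span (v_mem_W u v)
  | algebraMap r =>
    rw [Algebra.algebraMap_eq_smul_one]
    exact Submodule.smul_mem _ _ (Submodule.subset_span (one_mem_W u v))
  | add x y _ _ hx hy => exact add_mem hx hy
  | mul x y _ _ hx hy =>
    have hmm := Submodule.mul_mem_mul hx hy
    rw [Submodule.span_mul_span] at hmm
    refine Submodule.span_mono ?_ hmm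
    exact Set.mul_subset_iff.mpr fun a ha b hb => W_mul u v a ha b hb
  | star x _ hx => exact span_star u v x hx

lemma plus_sigma_mem (σ : A ≃⋆ₐ[ℂ] A) (u v : unitary A) (hσu : σ u = v) (hσv : σ v = u) :
    ∀ x ∈ Submodule.span ℂ (W u v), x + σ x ∈ B u v := by
  intro x hx
  induction hx using Submodule.span_induction with
  | mem y hy =>
    rcases hy with ⟨L, rfl⟩
    rw [sigma_wrd σ u v hσu hσv L]
    exact skey u v L.length L le_rfl
  | zero => simpa using zero_mem (B u v)
  | add a b _ _ ha hb =>
    have h : (a + b) + σ (a + b) = (a + σ a) + (b + σ b) := by rw [map_add]; abel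
    rw [h]; exact add_mem ha hb
  | smul c a _ ha =>
    have h : c • a + σ (c • a) = c • (a + σ a) := by rw [map_smul, smul_add]
    rw [h]; exact SMulMemClass.smul_mem c ha

end SymAux

end SymAux

theorem fixed_point_algebra_eq_symmetric_words
    {A : Type*} [CStarAlgebra A]
    (u v : unitary A)
    (hgen : (StarAlgebra.adjoin ℂ ({(u : A), (v : A)} : Set A)).topologicalClosure = ⊤)
    (σ : A ≃⋆ₐ[ℂ] A) (hσu : σ u = v) (hσv : σ v = u) :
    {a : A | σ a = a} =
      ((StarAlgebra.adjoin ℂ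
        {a : A | ∃ n : ℤ, a = ((u ^ n : unitary A) : A) + ((v ^ n : unitary A) : A)}
       ).topologicalClosure : Set A) := by
  have hσcont : Continuous ⇑σ := (NonUnitalStarAlgHom.isometry σ σ.injective).continuous
  have hun : ∀ n : ℤ, σ ((u ^ n : unitary A) : A) = ((v ^ n : unitary A) : A) := by
    intro n
    have h : Unitary.map (⟨(σ : A →* A), map_star σ⟩ : A →⋆* A) u = v := Subtype.ext hσu
    calc σ ((u ^ n : unitary A) : A) = ((Unitary.map (⟨(σ : A →* A), map_star σ⟩ : A →⋆* A) (u ^ n) : unitary A) : A) := rfl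
    _ = (((Unitary.map (⟨(σ : A →* A), map_star σ⟩ : A →⋆* A) u) ^ n : unitary A) : A) := by rw [map_zpow]
    _ = _ := by rw [h]
  have hvn : ∀ n : ℤ, σ ((v ^ n : unitary A) : A) = ((u ^ n : unitary A) : A) := by
    intro n
    have h : Unitary.map (⟨(σ : A →* A), map_star σ⟩ : A →⋆* A) v = u := Subtype.ext hσv
    calc σ ((v ^ n : unitary A) : A) = ((Unitary.map (⟨(σ : A →* A), map_star σ⟩ : A →⋆* A) (v ^ n) : unitary A) : A) := rfl
    _ = (((Unitary.map (⟨(σ : A →* A), map_star σ⟩ : A →⋆* A) v) ^ n : unitary A) : A) := by rw [map_zpow]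
    _ = _ := by rw [h]
  have hcoe : ((StarAlgebra.adjoin ℂ
        {a : A | ∃ n : ℤ, a = ((u ^ n : unitary A) : A) + ((v ^ n : unitary A) : A)}
       ).topologicalClosure : Set A) = closure ((SymAux.B u v : Set A)) :=
    StarSubalgebra.topologicalClosure_coe _
  rw [hcoe]
  ext a
  simp only [Set.mem_setOf_eq]
  constructor
  · intro ha
    have hclos : a ∈ closure ((StarAlgebra.adjoin ℂ ({(u : A), (v : A)} : Set A) : Set A)) := by
      rw [← StarSubalgebra.topologicalClosure_coe, hgen]
      trivial
    set φ : A → A := fun x => (2 : ℂ)⁻¹ • (x + σ x) with hφdef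
    have hcont : Continuous φ := by
      apply Continuous.const_smul
      exact continuous_id.add hσcont
    have himg : φ '' ((StarAlgebra.adjoin ℂ ({(u : A), (v : A)} : Set A) : Set A))
        ⊆ ((SymAux.B u v : Set A)) := by
      rintro _ ⟨x, hx, rfl⟩
      have hmem := SymAux.plus_sigma_mem σ u v hσu hσv x (SymAux.adjoin_le_span u v x hx)
      exact SMulMemClass.smul_mem _ hmem
    have h1 : φ a ∈ closure ((SymAux.B u v : Set A)) := by
      have h2 : φ a ∈ φ '' closure ((StarAlgebra.adjoin ℂ ({(u : A), (v : A)} : Set A) : Set A)) :=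
        ⟨a, hclos, rfl⟩
      have h3 := image_closure_subset_closure_image hcont h2
      exact closure_mono himg h3
    have hφa : φ a = a := by
      rw [hφdef]
      simp only [ha]
      rw [← two_smul ℂ a, smul_smul]
      norm_num
    rwa [hφa] at h1
  · intro ha
    have hBfix : ((SymAux.B u v : Set A)) ⊆ {x : A | σ x = x} := by
      intro x hx
      induction hx using StarAlgebra.adjoin_induction with
      | mem x hx =>
        rcases hx with ⟨n, rfl⟩
        show σ _ = _
        rw [map_add, hun n, hvn n, add_comm]
      | algebraMap r =>
        show σ _ = _
        rw [Algebra.algebraMap_eq_smul_one, map_smul, map_one]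
      | add x y _ _ hx hy => show σ _ = _ ; rw [map_add, hx, hy]
      | mul x y _ _ hx hy => show σ _ = _ ; rw [map_mul, hx, hy]
      | star x _ hx => show σ _ = _ ; rw [map_star, hx]
    have hclosed : IsClosed {x : A | σ x = x} := isClosed_eq hσcont continuous_id
    exact closure_minimal hBfix hclosed ha
end

section
/- Let A be a unital C*-algebra and Z ∈ A with ‖Z‖ ≤ 1. Then the 2×2 matrix over A given by β(Z) = [[Z*Z, Z*√(1 − ZZ*)], [√(1 − ZZ*)·Z, 1 − ZZ*]] is a projection, i.e., β(Z) is self-adjoint and β(Z)² = β(Z) in the matrix *-algebra M₂(A). -/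
theorem beta_is_projection
    {A : Type*} [CStarAlgebra A] [PartialOrder A] [StarOrderedRing A]
    (Z : A) (hZ : ‖Z‖ ≤ 1)
    (β : Matrix (Fin 2) (Fin 2) A)
    (hβ : β = !![star Z * Z, star Z * CFC.sqrt (1 - Z * star Z);
                 CFC.sqrt (1 - Z * star Z) * Z, 1 - Z * star Z]) :
    star β = β ∧ β * β = β := by
  have hnn : (0 : A) ≤ Z * star Z := mul_star_self_nonneg Z
  have hnorm : ‖Z * star Z‖ ≤ 1 := by
    calc ‖Z * star Z‖ = ‖star Z‖ * ‖star Z‖ := by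
          simpa using CStarRing.norm_star_mul_self (x := star Z)
      _ ≤ 1 * 1 := by
          have : ‖star Z‖ ≤ 1 := by simpa using hZ
          exact mul_le_mul this this (norm_nonneg _) zero_le_one
      _ = 1 := one_mul 1
  have hle : Z * star Z ≤ 1 :=
    (CStarAlgebra.mem_Icc_iff_norm_le_one.mpr ⟨hnn, hnorm⟩).2
  have h0 : (0 : A) ≤ 1 - Z * star Z := sub_nonneg.mpr hle
  set p : A := 1 - Z * star Z with hp
  set s : A := CFC.sqrt p with hs
  have hs2 : s * s = p := CFC.sqrt_mul_sqrt_self p h0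
  have hsnn : (0 : A) ≤ s := CFC.sqrt_nonneg (a := p)
  have hssa : star s = s := (IsSelfAdjoint.of_nonneg hsnn)
  have hcomm : s * p = p * s := by
    rw [← hs2, mul_assoc]
  have hZZ : Z * star Z = 1 - p := by rw [hp, sub_sub_cancel]
  have hpsa : star p = p := (IsSelfAdjoint.of_nonneg h0)
  have e00 : star Z * Z * (star Z * Z) + star Z * s * (s * Z) = star Z * Z := by
    rw [show star Z * s * (s * Z) = star Z * (s * s) * Z from by noncomm_ring, hs2, hp]
    noncomm_ring
  have e01 : star Z * Z * (star Z * s) + star Z * s * p = star Z * s := by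
    rw [show star Z * Z * (star Z * s) = star Z * (Z * star Z) * s from by noncomm_ring, hZZ,
      show star Z * s * p = star Z * (s * p) from by noncomm_ring, hcomm]
    noncomm_ring
  have e10 : s * Z * (star Z * Z) + p * (s * Z) = s * Z := by
    rw [show s * Z * (star Z * Z) = s * (Z * star Z) * Z from by noncomm_ring, hZZ,
      show p * (s * Z) = (p * s) * Z from by noncomm_ring, ← hcomm]
    noncomm_ring
  have e11 : s * Z * (star Z * s) + p * p = p := by
    rw [show s * Z * (star Z * s) = s * (Z * star Z) * s from by noncomm_ring, hZZ,
      show s * (1 - p) * s = s * s - s * p * s from by noncomm_ring, hs2,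
      show s * p * s = s * (p * s) from by rw [mul_assoc], ← hcomm,
      show s * (s * p) = (s * s) * p from by rw [mul_assoc], hs2]
    noncomm_ring
  subst hβ
  refine ⟨?_, ?_⟩
  · ext i j
    fin_cases i <;> fin_cases j <;>
      simp [Matrix.conjTranspose_apply, star_mul, hssa, hpsa]
  · rw [Matrix.mul_fin_two, e00, e01, e10, e11]
end

section
/- Let A be a unital C*-algebra and let u and v be unitary elements of A. For t ∈ [0,1] set Z_t = t·u + (1−t)·v (so ‖Z_t‖ ≤ 1), and let β_t = [[Z_t*Z_t, Z_t*√(1 − Z_tZ_t*)], [√(1 − Z_tZ_t*)·Z_t, 1 − Z_tZ_t*]] ∈ M₂(A). Then: (i) the map t ↦ β_t is continuous from [0,1] to M₂(A); (ii) β_t is a projection for every t ∈ [0,1]; (iii) β_0 = β_1 = p₂ where p₂ = [[1,0],[0,0]]; and (iv) β_{1/2} = β(Z) where Z = (1/2)(u+v). In particular, the projection β(Z) is joined to p₂ by a continuous path of projections in M₂(A). -/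
open Polynomial in
lemma my_poly_approx_sqrt {ε : ℝ} (hε : 0 < ε) :
    ∃ q : ℝ[X], ∀ x ∈ Set.Icc (0:ℝ) 1, |Real.sqrt x - q.eval x| < ε := by
  set f : C(Set.Icc (0:ℝ) 1, ℝ) :=
    ⟨fun x => Real.sqrt (x : ℝ), Real.continuous_sqrt.comp continuous_subtype_val⟩ with hfdef
  have hmem : f ∈ closure (polynomialFunctions (Set.Icc (0:ℝ) 1) : Set C(Set.Icc (0:ℝ) 1, ℝ)) := by
    have h := polynomialFunctions_closure_eq_top (0:ℝ) 1
    have h2 : f ∈ (polynomialFunctions (Set.Icc (0:ℝ) 1)).topologicalClosure := by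
      rw [h]; trivial
    exact h2
  obtain ⟨g, hg, hdist⟩ := Metric.mem_closure_iff.mp hmem ε hε
  obtain ⟨q, rfl⟩ : ∃ q : ℝ[X], Polynomial.toContinuousMapOnAlgHom (Set.Icc (0:ℝ) 1) q = g := by
    have : g ∈ Set.range (Polynomial.toContinuousMapOnAlgHom (Set.Icc (0:ℝ) 1)) := by
      rw [← polynomialFunctions_coe]; exact hg
    exact this
  refine ⟨q, fun x hx => ?_⟩
  have h3 := ContinuousMap.dist_apply_le_dist (f := f)
    (g := Polynomial.toContinuousMapOnAlgHom (Set.Icc (0:ℝ) 1) q) ⟨x, hx⟩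
  have h4 : dist (f ⟨x, hx⟩)
      ((Polynomial.toContinuousMapOnAlgHom (Set.Icc (0:ℝ) 1) q) ⟨x, hx⟩) < ε := lt_of_le_of_lt h3 hdist
  simpa [hfdef, Real.dist_eq, Polynomial.toContinuousMapOn, Polynomial.toContinuousMap] using h4

lemma my_sqrt_eq_cfc_real {A : Type*} [CStarAlgebra A] [PartialOrder A] [StarOrderedRing A]
    (a : A) (ha : 0 ≤ a) : CFC.sqrt a = cfc Real.sqrt a := by
  have hsa : IsSelfAdjoint a := IsSelfAdjoint.of_nonneg ha
  refine CFC.sqrt_unique ?_ ?_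
  · calc cfc Real.sqrt a * cfc Real.sqrt a
        = cfc (fun x => Real.sqrt x * Real.sqrt x) a := (cfc_mul Real.sqrt Real.sqrt a).symm
      _ = cfc (id : ℝ → ℝ) a := cfc_congr fun x hx =>
          Real.mul_self_sqrt (spectrum_nonneg_of_nonneg ha hx)
      _ = a := cfc_id ℝ a
  · exact cfc_nonneg fun x _ => Real.sqrt_nonneg x

lemma my_sqrt_continuousOn {A : Type*} [CStarAlgebra A] [PartialOrder A] [StarOrderedRing A] :
    ContinuousOn (fun a : A => CFC.sqrt a) {a : A | 0 ≤ a ∧ ‖a‖ ≤ 1} := by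
  have hcongr : ∀ a ∈ {a : A | 0 ≤ a ∧ ‖a‖ ≤ 1}, CFC.sqrt a = cfc Real.sqrt a :=
    fun a ha => my_sqrt_eq_cfc_real a ha.1
  refine ContinuousOn.congr ?_ hcongr
  rw [Metric.continuousOn_iff]
  intro a ha ε hε
  obtain ⟨q, hq⟩ := my_poly_approx_sqrt (show (0:ℝ) < ε/3 by linarith)
  have hcont : ContinuousAt (fun b : A => Polynomial.aeval b q) a := q.continuous_aeval.continuousAt
  obtain ⟨δ, hδ, hδ'⟩ := Metric.continuousAt_iff.mp hcont (ε/3) (by linarith)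
  refine ⟨δ, hδ, fun b hb hab => ?_⟩
  have key : ∀ c ∈ {a : A | 0 ≤ a ∧ ‖a‖ ≤ 1},
      ‖cfc Real.sqrt c - Polynomial.aeval c q‖ ≤ ε/3 := by
    intro c hc
    rcases subsingleton_or_nontrivial A with hA | hA
    · rw [Subsingleton.elim (cfc Real.sqrt c - Polynomial.aeval c q) 0, norm_zero]; linarith
    have hsa : IsSelfAdjoint c := IsSelfAdjoint.of_nonneg hc.1
    rw [← cfc_polynomial q c, ← cfc_sub Real.sqrt q.eval c
      Real.continuous_sqrt.continuousOn q.continuous.continuousOn]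
    refine norm_cfc_le (by linarith) fun x hx => ?_
    have hx0 : 0 ≤ x := spectrum_nonneg_of_nonneg hc.1 hx
    have hx1 : x ≤ 1 := le_trans (Real.le_norm_self x)
      (le_trans (spectrum.norm_le_norm_of_mem hx) hc.2)
    exact le_of_lt (by simpa [Real.norm_eq_abs] using hq x ⟨hx0, hx1⟩)
  calc dist (cfc Real.sqrt b) (cfc Real.sqrt a)
      ≤ dist (cfc Real.sqrt b) (Polynomial.aeval b q)
        + dist (Polynomial.aeval b q) (Polynomial.aeval a q)
        + dist (Polynomial.aeval a q) (cfc Real.sqrt a) := dist_triangle4 _ _ _ _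
    _ < ε/3 + ε/3 + ε/3 := by
        have k1 : dist (cfc Real.sqrt b) (Polynomial.aeval b q) ≤ ε/3 := by
          rw [dist_eq_norm]; exact key b hb
        have k2 : dist (Polynomial.aeval b q) (Polynomial.aeval a q) < ε/3 := hδ' hab
        have k3 : dist (Polynomial.aeval a q) (cfc Real.sqrt a) ≤ ε/3 := by
          rw [dist_comm, dist_eq_norm]; exact key a ha
        linarith
    _ = ε := by ring

theorem beta_homotopy_of_projections
    {A : Type*} [CStarAlgebra A] [PartialOrder A] [StarOrderedRing A]
    (u v : A) (hu : u ∈ unitary A) (hv : v ∈ unitary A)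
    (Zt : ℝ → A) (hZt : ∀ t : ℝ, Zt t = t • u + (1 - t) • v)
    (B : ℝ → Matrix (Fin 2) (Fin 2) A)
    (hB : ∀ t : ℝ, B t =
      !![star (Zt t) * Zt t, star (Zt t) * CFC.sqrt (1 - Zt t * star (Zt t));
         CFC.sqrt (1 - Zt t * star (Zt t)) * Zt t, 1 - Zt t * star (Zt t)])
    (p₂ : Matrix (Fin 2) (Fin 2) A) (hp : p₂ = !![1, 0; 0, 0])
    (Z : A) (hZ : Z = (1 / 2 : ℝ) • (u + v)) :
    ContinuousOn B (Set.Icc 0 1) ∧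
    (∀ t ∈ Set.Icc (0 : ℝ) 1, star (B t) = B t ∧ B t * B t = B t) ∧
    B 0 = p₂ ∧ B 1 = p₂ ∧
    B (1 / 2) =
      !![star Z * Z, star Z * CFC.sqrt (1 - Z * star Z);
         CFC.sqrt (1 - Z * star Z) * Z, 1 - Z * star Z] := by
  -- norm bounds
  have hnu : ‖u‖ ≤ 1 := by
    rcases subsingleton_or_nontrivial A with hA | hA
    · rw [Subsingleton.elim u 0, norm_zero]; norm_num
    · exact le_of_eq (CStarRing.norm_of_mem_unitary hu)
  have hnv : ‖v‖ ≤ 1 := by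
    rcases subsingleton_or_nontrivial A with hA | hA
    · rw [Subsingleton.elim v 0, norm_zero]; norm_num
    · exact le_of_eq (CStarRing.norm_of_mem_unitary hv)
  have hn : ∀ t ∈ Set.Icc (0:ℝ) 1, ‖Zt t‖ ≤ 1 := by
    intro t ht
    rw [hZt]
    calc ‖t • u + (1-t) • v‖ ≤ ‖t • u‖ + ‖(1-t) • v‖ := norm_add_le _ _
      _ = t * ‖u‖ + (1-t) * ‖v‖ := by
          rw [norm_smul, norm_smul, Real.norm_of_nonneg ht.1,
            Real.norm_of_nonneg (by linarith [ht.2])]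
      _ ≤ t * 1 + (1-t) * 1 := add_le_add (mul_le_mul_of_nonneg_left hnu ht.1)
          (mul_le_mul_of_nonneg_left hnv (by linarith [ht.2]))
      _ = 1 := by ring
  -- nonnegativity of 1 - w w*
  have hs0 : ∀ t ∈ Set.Icc (0:ℝ) 1, 0 ≤ 1 - Zt t * star (Zt t) := by
    intro t ht
    rw [sub_nonneg]
    refine (CStarAlgebra.norm_le_one_iff_of_nonneg _ (mul_star_self_nonneg (Zt t))).mp ?_
    calc ‖Zt t * star (Zt t)‖ ≤ ‖Zt t‖ * ‖star (Zt t)‖ := norm_mul_le _ _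
      _ ≤ 1 * 1 := by rw [norm_star]; exact mul_le_mul (hn t ht) (hn t ht) (norm_nonneg _) zero_le_one
      _ = 1 := by ring
  have hs1 : ∀ t ∈ Set.Icc (0:ℝ) 1, ‖1 - Zt t * star (Zt t)‖ ≤ 1 := by
    intro t ht
    refine (CStarAlgebra.norm_le_one_iff_of_nonneg _ (hs0 t ht)).mpr ?_
    have : 0 ≤ Zt t * star (Zt t) := mul_star_self_nonneg (Zt t)
    calc (1 : A) - Zt t * star (Zt t) ≤ 1 - 0 := by gcongr
      _ = 1 := sub_zero 1
  refine ⟨?_, ?_, ?_, ?_, ?_⟩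
  · -- continuity
    have hZc : Continuous Zt := by
      rw [funext hZt]
      fun_prop
    have hsc : Continuous (fun t => 1 - Zt t * star (Zt t)) := by fun_prop
    have hsqrtc : ContinuousOn (fun t => CFC.sqrt (1 - Zt t * star (Zt t))) (Set.Icc 0 1) := by
      refine my_sqrt_continuousOn.comp hsc.continuousOn ?_
      intro t ht
      exact ⟨hs0 t ht, hs1 t ht⟩
    rw [funext hB]
    rw [continuousOn_iff_continuous_restrict]
    apply continuous_matrix
    intro i j
    fin_cases i <;> fin_cases j <;>
      simp only [Set.restrict, Matrix.cons_val', Matrix.cons_val_zero, Matrix.cons_val_one,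
        Matrix.head_cons, Matrix.head_fin_const, Matrix.of_apply, Matrix.cons_val_fin_one,
        Matrix.empty_val', Fin.mk_zero, Fin.mk_one]
    · exact ((continuous_star.comp hZc).mul hZc).continuousOn.restrict
    · exact ((continuous_star.comp hZc).continuousOn.mul hsqrtc).restrict
    · exact (hsqrtc.mul hZc.continuousOn).restrict
    · exact (continuous_const.sub (hZc.mul (continuous_star.comp hZc))).continuousOn.restrict
  · -- projections
    intro t ht
    set w := Zt t with hw
    set s : A := 1 - w * star w with hsdef
    have hs0' : 0 ≤ s := hs0 t ht
    have hss : CFC.sqrt s * CFC.sqrt s = s := CFC.sqrt_mul_sqrt_self s hs0'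
    have hcomm : CFC.sqrt s * s = s * CFC.sqrt s := by
      calc CFC.sqrt s * s = CFC.sqrt s * (CFC.sqrt s * CFC.sqrt s) := by rw [hss]
        _ = (CFC.sqrt s * CFC.sqrt s) * CFC.sqrt s := (mul_assoc _ _ _).symm
        _ = s * CFC.sqrt s := by rw [hss]
    have hsast : star s = s := (IsSelfAdjoint.of_nonneg hs0').star_eq
    have hsqsa : star (CFC.sqrt s) = CFC.sqrt s := (IsSelfAdjoint.of_nonneg (CFC.sqrt_nonneg s)).star_eq
    have h1 : w * star w = 1 - s := by rw [hsdef, sub_sub_cancel]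
    constructor
    · rw [hB t, ← hw, ← hsdef]
      ext i j
      fin_cases i <;> fin_cases j <;>
        simp [Matrix.star_apply, star_mul, hsast, hsqsa, mul_assoc]
    · rw [hB t, ← hw, ← hsdef]
      have e00 : star w * w * (star w * w) + star w * CFC.sqrt s * (CFC.sqrt s * w)
          = star w * w := by
        rw [show star w * w * (star w * w) = star w * (w * star w) * w by noncomm_ring,
          show star w * CFC.sqrt s * (CFC.sqrt s * w)
            = star w * (CFC.sqrt s * CFC.sqrt s) * w by noncomm_ring, hss, h1]
        noncomm_ring
      have e01 : star w * w * (star w * CFC.sqrt s) + star w * CFC.sqrt s * s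
          = star w * CFC.sqrt s := by
        rw [show star w * w * (star w * CFC.sqrt s) + star w * CFC.sqrt s * s
          = star w * ((w * star w) * CFC.sqrt s) + star w * (CFC.sqrt s * s) by noncomm_ring,
          h1, hcomm]
        noncomm_ring
      have e10 : CFC.sqrt s * w * (star w * w) + s * (CFC.sqrt s * w) = CFC.sqrt s * w := by
        rw [show CFC.sqrt s * w * (star w * w) + s * (CFC.sqrt s * w)
          = CFC.sqrt s * (w * star w) * w + (s * CFC.sqrt s) * w by noncomm_ring, h1, ← hcomm]
        noncomm_ring
      have e11 : CFC.sqrt s * w * (star w * CFC.sqrt s) + s * s = s := by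
        rw [show CFC.sqrt s * w * (star w * CFC.sqrt s) + s * s
          = CFC.sqrt s * (w * star w) * CFC.sqrt s + s * s by noncomm_ring, h1,
          show CFC.sqrt s * (1 - s) * CFC.sqrt s + s * s
          = CFC.sqrt s * CFC.sqrt s - (CFC.sqrt s * s) * CFC.sqrt s + s * s by noncomm_ring,
          hcomm, mul_assoc, hss]
        noncomm_ring
      ext i j
      fin_cases i <;> fin_cases j <;>
        simp [Matrix.mul_apply, Fin.sum_univ_two, e00, e01, e10, e11]
  · -- B 0 = p₂
    have h0 : Zt 0 = v := by rw [hZt]; simp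
    have hvv : star v * v = 1 := (Unitary.mem_iff.mp hv).1
    have hvv' : v * star v = 1 := (Unitary.mem_iff.mp hv).2
    rw [hB 0, hp, h0, hvv', hvv]
    simp [CFC.sqrt_zero]
  · -- B 1 = p₂
    have h1' : Zt 1 = u := by rw [hZt]; simp
    have huu : star u * u = 1 := (Unitary.mem_iff.mp hu).1
    have huu' : u * star u = 1 := (Unitary.mem_iff.mp hu).2
    rw [hB 1, hp, h1', huu', huu]
    simp [CFC.sqrt_zero]
  · -- B (1/2)
    have h2 : Zt (1/2) = Z := by
      rw [hZt, hZ, smul_add]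
      norm_num
    rw [hB (1/2), h2]
end

section
/- Let A be a unital C*-algebra, let u and v be unitary elements of A, let σ be a *-automorphism of A with σ(u) = v and σ(v) = u, and set Z = (1/2)(u + v). Let β(Z) = [[Z*Z, Z*√(1 − ZZ*)], [√(1 − ZZ*)·Z, 1 − ZZ*]] and p₂ = [[1,0],[0,0]] in M₂(A). Then there exists a continuous map γ : [0,1] → M₂(A) such that γ(0) = 1 − p₂, γ(1) = β(Z), for every t ∈ [0,1] the matrix γ(t) is a projection, and every entry of γ(t) is fixed by σ. In particular, β(Z) and 1 − p₂ are homotopic through projections whose entries lie in the fixed-point algebra of σ. -/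
theorem beta_homotopic_to_one_sub_p2_within_fixed_point_algebra
    {A : Type*} [CStarAlgebra A] [PartialOrder A] [StarOrderedRing A]
    (u v : A) (hu : u ∈ unitary A) (hv : v ∈ unitary A)
    (σ : A ≃⋆ₐ[ℂ] A) (hσu : σ u = v) (hσv : σ v = u)
    (Z : A) (hZ : Z = (1 / 2 : ℝ) • (u + v))
    (β p₂ : Matrix (Fin 2) (Fin 2) A)
    (hβ : β = !![star Z * Z, star Z * CFC.sqrt (1 - Z * star Z);
                 CFC.sqrt (1 - Z * star Z) * Z, 1 - Z * star Z])
    (hp : p₂ = !![1, 0; 0, 0]) :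
    ∃ γ : ℝ → Matrix (Fin 2) (Fin 2) A,
      ContinuousOn γ (Set.Icc 0 1) ∧
      γ 0 = 1 - p₂ ∧ γ 1 = β ∧
      (∀ t ∈ Set.Icc (0 : ℝ) 1,
        (star (γ t) = γ t ∧ γ t * γ t = γ t) ∧ ∀ i j, σ (γ t i j) = γ t i j) := by
  by_cases hsub : Subsingleton A
  · exact ⟨fun _ => β, continuousOn_const, Subsingleton.elim _ _, rfl,
      fun t _ => ⟨⟨Subsingleton.elim _ _, Subsingleton.elim _ _⟩,
        fun i j => Subsingleton.elim _ _⟩⟩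
  have : Nontrivial A := not_subsingleton_iff_nontrivial.mp hsub
  -- basic facts about `a = Z * star Z`
  have ha0 : (0 : A) ≤ Z * star Z := mul_star_self_nonneg Z
  have haSA : IsSelfAdjoint (Z * star Z) := IsSelfAdjoint.of_nonneg ha0
  have hZ1 : ‖Z‖ ≤ 1 := by
    rw [hZ]
    calc ‖(1/2 : ℝ) • (u + v)‖ = (1/2 : ℝ) * ‖u + v‖ := by
          rw [norm_smul]; norm_num
      _ ≤ (1/2 : ℝ) * (‖u‖ + ‖v‖) := by gcongr; exact norm_add_le u v
      _ = 1 := by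
          rw [CStarRing.norm_of_mem_unitary hu, CStarRing.norm_of_mem_unitary hv]; norm_num
  have hanorm : ‖Z * star Z‖ ≤ 1 := by
    calc ‖Z * star Z‖ ≤ ‖Z‖ * ‖star Z‖ := norm_mul_le _ _
      _ ≤ 1 := by rw [norm_star]; nlinarith [norm_nonneg Z]
  have hspec : ∀ x ∈ spectrum ℝ (Z * star Z), 0 ≤ x ∧ x ≤ 1 := by
    intro x hx
    refine ⟨(StarOrderedRing.nonneg_iff_spectrum_nonneg _ haSA).mp ha0 x hx, ?_⟩
    calc x ≤ ‖x‖ := Real.le_norm_self x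
      _ ≤ ‖Z * star Z‖ := spectrum.norm_le_norm_of_mem hx
      _ ≤ 1 := hanorm
  -- σ fixes everything in sight
  have hσsmul : ∀ (r : ℝ) (x : A), σ (r • x) = r • σ x := fun r x => by
    rw [← algebraMap_smul ℂ r x, map_smul, algebraMap_smul]
  have hσZ : σ Z = Z := by rw [hZ, hσsmul, map_add, hσu, hσv, add_comm]
  have hσcont : Continuous σ :=
    (NonUnitalStarAlgHom.isometry σ (EquivLike.injective σ)).continuous
  have hσa : σ (Z * star Z) = Z * star Z := by rw [map_mul, map_star, hσZ]
  -- the square-root family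
  have hfc : ∀ t : ℝ, ContinuousOn (fun x => Real.sqrt (1 - t ^ 2 * x))
      (spectrum ℝ (Z * star Z)) := fun t => Continuous.continuousOn (by fun_prop)
  set s : ℝ → A := fun t => cfc (fun x => Real.sqrt (1 - t ^ 2 * x)) (Z * star Z) with hs_def
  have hs_nonneg : ∀ t, 0 ≤ s t := fun t => cfc_nonneg (fun x _ => Real.sqrt_nonneg _)
  have hs_sa : ∀ t, IsSelfAdjoint (s t) := fun t => IsSelfAdjoint.of_nonneg (hs_nonneg t)
  have hσs : ∀ t, σ (s t) = s t := fun t => by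
    rw [hs_def]
    rw [StarAlgHomClass.map_cfc σ _ _ (hfc t) hσcont haSA (by rw [hσa]; exact haSA), hσa]
  have hs_sq : ∀ t ∈ Set.Icc (0:ℝ) 1, s t * s t = 1 - t ^ 2 • (Z * star Z) := by
    intro t ht
    rw [hs_def]
    simp only
    rw [← cfc_mul _ _ _ (hfc t) (hfc t)]
    have h1 : ∀ x ∈ spectrum ℝ (Z * star Z),
        Real.sqrt (1 - t ^ 2 * x) * Real.sqrt (1 - t ^ 2 * x) = 1 - t ^ 2 * x := by
      intro x hx
      obtain ⟨h0, h1'⟩ := hspec x hx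
      obtain ⟨ht0, ht1⟩ := ht
      exact Real.mul_self_sqrt (by nlinarith)
    rw [cfc_congr h1]
    have h2 : (fun x : ℝ => 1 - t ^ 2 * x)
        = (fun x : ℝ => (fun _ => (1:ℝ)) x - (fun x => t ^ 2 • x) x) := by
      funext x; simp [smul_eq_mul]
    rw [h2, cfc_sub _ _ _ (by fun_prop) (by fun_prop), cfc_const_one ℝ _,
      cfc_smul (t ^ 2) (fun x : ℝ => x) _ (by fun_prop), cfc_id' ℝ _]
  have hs_comm : ∀ t, s t * (Z * star Z) = (Z * star Z) * s t := fun t => by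
    have h := cfc_commute_cfc (fun x => Real.sqrt (1 - t ^ 2 * x)) id (Z * star Z)
    rwa [cfc_id ℝ _] at h
  have hs_cont : Continuous s := by
    let G : C(ℝ × spectrum ℝ (Z * star Z), ℝ) :=
      ⟨fun p => Real.sqrt (1 - p.1 ^ 2 * (p.2 : ℝ)), by fun_prop⟩
    have h1 : Continuous fun t => cfcHom haSA (G.curry t) :=
      (cfcHom_isClosedEmbedding haSA).continuous.comp G.curry.continuous
    have h2 : ∀ t : ℝ, s t = cfcHom haSA (G.curry t) := by
      intro t
      rw [hs_def]
      simp only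
      rw [cfc_apply (fun x => Real.sqrt (1 - t ^ 2 * x)) (Z * star Z) haSA (hfc t)]
      congr 1
    rw [hs_def] at h2 ⊢
    rw [funext h2]
    exact h1
  -- the homotopy
  refine ⟨fun t =>
    !![t ^ 2 • (star Z * Z), t • (star Z * s t);
       t • (s t * Z), 1 - t ^ 2 • (Z * star Z)], ?_, ?_, ?_, ?_⟩
  · refine Continuous.continuousOn (continuous_matrix fun i j => ?_)
    fin_cases i <;> fin_cases j <;>
      simp only [Fin.zero_eta, Fin.mk_one, Matrix.cons_val', Matrix.cons_val_zero,
        Matrix.cons_val_one, Matrix.head_cons, Matrix.empty_val', Matrix.cons_val_fin_one,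
        Matrix.head_fin_const]
    · exact ((continuous_pow 2).smul continuous_const)
    · exact (continuous_id.smul (continuous_const.mul hs_cont))
    · exact (continuous_id.smul (hs_cont.mul continuous_const))
    · exact continuous_const.sub ((continuous_pow 2).smul continuous_const)
  · rw [hp]
    ext i j
    fin_cases i <;> fin_cases j <;> simp [Matrix.one_fin_two]
  · have hs1 : s 1 = CFC.sqrt (1 - Z * star Z) := by
      refine (CFC.sqrt_unique ?_ (hs_nonneg 1)).symm
      rw [hs_sq 1 ⟨zero_le_one, le_refl 1⟩]
      norm_num
    rw [hβ]
    ext i j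
    fin_cases i <;> fin_cases j <;> simp [hs1]
  · intro t ht
    have eSS : ∀ x : A, s t * (s t * x) = x - t ^ 2 • (Z * (star Z * x)) := by
      intro x
      rw [← mul_assoc, hs_sq t ht, one_sub_mul, smul_mul_assoc, mul_assoc]
    have eSS' : s t * s t = 1 - t ^ 2 • (Z * star Z) := hs_sq t ht
    have eComm : ∀ x : A, s t * (Z * (star Z * x)) = Z * (star Z * (s t * x)) := by
      intro x
      calc s t * (Z * (star Z * x)) = (s t * (Z * star Z)) * x := by noncomm_ring
        _ = ((Z * star Z) * s t) * x := by rw [hs_comm]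
        _ = Z * (star Z * (s t * x)) := by noncomm_ring
    have eComm' : s t * (Z * star Z) = Z * (star Z * s t) := by
      rw [hs_comm]; noncomm_ring
    refine ⟨⟨?_, ?_⟩, ?_⟩
    · ext i j
      rw [Matrix.star_apply]
      fin_cases i <;> fin_cases j
      · show star (t ^ 2 • (star Z * Z)) = t ^ 2 • (star Z * Z)
        rw [star_smul, star_trivial, star_mul, star_star]
      · show star (t • (s t * Z)) = t • (star Z * s t)
        rw [star_smul, star_trivial, star_mul, (hs_sa t).star_eq]
      · show star (t • (star Z * s t)) = t • (s t * Z)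
        rw [star_smul, star_trivial, star_mul, (hs_sa t).star_eq, star_star]
      · show star (1 - t ^ 2 • (Z * star Z)) = 1 - t ^ 2 • (Z * star Z)
        rw [star_sub, star_one, star_smul, star_trivial, star_mul, star_star]
    · simp only [Matrix.mul_fin_two]
      ext i j
      fin_cases i <;> fin_cases j
      · show (t ^ 2 • (star Z * Z)) * (t ^ 2 • (star Z * Z))
            + (t • (star Z * s t)) * (t • (s t * Z)) = t ^ 2 • (star Z * Z)
        simp only [smul_mul_assoc, mul_smul_comm, smul_smul, mul_one_sub, one_sub_mul,
          mul_sub, sub_mul, smul_sub, mul_assoc, mul_one, one_mul, eComm, eComm', eSS, eSS']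
        module
      · show (t ^ 2 • (star Z * Z)) * (t • (star Z * s t))
            + (t • (star Z * s t)) * (1 - t ^ 2 • (Z * star Z)) = t • (star Z * s t)
        simp only [smul_mul_assoc, mul_smul_comm, smul_smul, mul_one_sub, one_sub_mul,
          mul_sub, sub_mul, smul_sub, mul_assoc, mul_one, one_mul, eComm, eComm', eSS, eSS']
        module
      · show (t • (s t * Z)) * (t ^ 2 • (star Z * Z))
            + (1 - t ^ 2 • (Z * star Z)) * (t • (s t * Z)) = t • (s t * Z)
        simp only [smul_mul_assoc, mul_smul_comm, smul_smul, mul_one_sub, one_sub_mul,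
          mul_sub, sub_mul, smul_sub, mul_assoc, mul_one, one_mul, eComm, eComm', eSS, eSS']
        module
      · show (t • (s t * Z)) * (t • (star Z * s t))
            + (1 - t ^ 2 • (Z * star Z)) * (1 - t ^ 2 • (Z * star Z)) = 1 - t ^ 2 • (Z * star Z)
        simp only [smul_mul_assoc, mul_smul_comm, smul_smul, mul_one_sub, one_sub_mul,
          mul_sub, sub_mul, smul_sub, mul_assoc, mul_one, one_mul, eComm, eComm', eSS, eSS']
        module
    · intro i j
      fin_cases i <;> fin_cases j
      · show σ (t ^ 2 • (star Z * Z)) = t ^ 2 • (star Z * Z)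
        rw [hσsmul, map_mul, map_star, hσZ]
      · show σ (t • (star Z * s t)) = t • (star Z * s t)
        rw [hσsmul, map_mul, map_star, hσZ, hσs]
      · show σ (t • (s t * Z)) = t • (s t * Z)
        rw [hσsmul, map_mul, hσs, hσZ]
      · show σ (1 - t ^ 2 • (Z * star Z)) = 1 - t ^ 2 • (Z * star Z)
        rw [map_sub, map_one, hσsmul, map_mul, map_star, hσZ]
end
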